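/- Let G be a finite graph and suppose there exist a vertex v' and a set S with v' ∈ I^2(S) \ I(S) in the cycle convexity. Then there exist adjacent vertices v, w in G, an induced cycle C containing the edge vw, and a cycle C' containing w but not v such that v has at most one neighbor in V(C') \ {w}. -/

import Mathlib

open SimpleGraph Set

variable {V : Type*}

/-- The interval function of the cycle convexity: `S` together with all vertices `u` such that
the subgraph induced by `S ∪ {u}` has a cycle containing `u`. -/
def cycInt (G : SimpleGraph V) (S : Set V) : Set V :=
  S ∪ {u | ∃ w : G.Walk u u, w.IsCycle ∧ ∀ x ∈ w.support, x ∈ S ∪ {u}}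

/-- The convex hull in the cycle convexity, obtained by iterating `cycInt`. -/
def cycHull (G : SimpleGraph V) (S : Set V) : Set V :=
  ⋃ k, (cycInt G)^[k] S

/-- A set is convex in the cycle convexity iff it is a fixed point of the interval function. -/
def CycConvex (G : SimpleGraph V) (S : Set V) : Prop := cycInt G S = S

/-- A hull set: a set whose convex hull is the whole vertex set. -/
def IsHullSet (G : SimpleGraph V) (S : Set V) : Prop := cycHull G S = Set.univ

/-- The convexity number: the largest cardinality of a convex set different from `V(G)`. -/
noncomputable def conNum (G : SimpleGraph V) : ℕ :=
  sSup {n | ∃ S : Set V, CycConvex G S ∧ S ≠ Set.univ ∧ S.ncard = n}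

/-- The percolation time: the largest `k > 0` such that some hull set `S` satisfies
`I^[k-1] S ≠ V(G)`; `0` if no such `k` exists. -/
noncomputable def percTime (G : SimpleGraph V) : ℕ :=
  sSup {k | 0 < k ∧ ∃ S : Set V, IsHullSet G S ∧ (cycInt G)^[k-1] S ≠ Set.univ}

/-- A set is convexly independent if no element lies in the hull of the others. -/
def ConvIndep (G : SimpleGraph V) (S : Set V) : Prop :=
  ∀ v ∈ S, v ∉ cycHull G (S \ {v})

/-- The independence number (as a supremum of cardinalities of independent sets). -/
noncomputable def alphaNum (G : SimpleGraph V) : ℕ :=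
  sSup {n | ∃ S : Set V, S.Pairwise (fun a b => ¬ G.Adj a b) ∧ S.ncard = n}

section CycleAux
open SimpleGraph

variable {V : Type*} {G : SimpleGraph V}

section DecEq
variable [DecidableEq V]

private lemma mem_support_rotate {v u x : V} (c : G.Walk v v) (h : u ∈ c.support) :
    x ∈ (c.rotate _ h).support ↔ x ∈ c.support := by
  rw [Walk.rotate, Walk.mem_support_append_iff]
  conv_rhs => rw [← Walk.take_spec c h]
  rw [Walk.mem_support_append_iff]
  exact or_comm

private lemma length_rotate' {v u : V} (c : G.Walk v v) (h : u ∈ c.support) :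
    (c.rotate _ h).length = c.length := by
  rw [Walk.rotate, Walk.length_append, Nat.add_comm, ← Walk.length_append, Walk.take_spec]

private lemma not_end_mem_takeUntil {a b y : V} {p : G.Walk a b}
    (hnd : p.support.Nodup) (hy : y ∈ p.support) (hyb : y ≠ b) :
    b ∉ (p.takeUntil y hy).support := by
  intro hb
  have hsp : p.support = (p.takeUntil y hy).support ++ (p.dropUntil y hy).support.tail := by
    conv_lhs => rw [← Walk.take_spec p hy]
    rw [Walk.support_append]
  rw [hsp, List.nodup_append] at hnd
  have hb2 : b ∈ (p.dropUntil y hy).support.tail := by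
    have hbs : b ∈ (p.dropUntil y hy).support := Walk.end_mem_support _
    rw [Walk.support_eq_cons, List.mem_cons] at hbs
    rcases hbs with h1 | h1
    · exact absurd h1.symm hyb
    · exact h1
  exact hnd.2.2 b hb b hb2 rfl

private lemma two_le_length_of_ne {x y : V} (p : G.Walk x y) (hxy : x ≠ y)
    (he : s(x, y) ∉ p.edges) : 2 ≤ p.length := by
  cases p with
  | nil => exact absurd rfl hxy
  | cons h q =>
    cases q with
    | nil => simp at he
    | cons h2 q2 =>
      simp only [Walk.length_cons]
      omega

private lemma chord_split {a x y : V} {c : G.Walk a a} (hc : c.IsCycle)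
    (hx : x ∈ c.support) (hy : y ∈ c.support) (hadj : G.Adj x y)
    (he : s(x, y) ∉ c.edges) :
    ∃ c₂ : G.Walk a a, c₂.IsCycle ∧ (∀ z ∈ c₂.support, z ∈ c.support) ∧
      c₂.length < c.length := by
  have hxy : x ≠ y := hadj.ne
  set r := c.rotate _ hx with hr
  have hrc : r.IsCycle := hc.rotate hx
  have hyr : y ∈ r.support := (mem_support_rotate c hx).mpr hy
  have hlenr : r.length = c.length := length_rotate' c hx
  have hedger : ∀ e, e ∈ r.edges → e ∈ c.edges := fun e hee =>
    (c.rotate_edges _ hx).mem_iff.mp hee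
  have hsuppr : ∀ z, z ∈ r.support → z ∈ c.support := fun z hz =>
    (mem_support_rotate c hx).mp hz
  set p1 := r.takeUntil y hyr with hp1
  set p2 := r.dropUntil y hyr with hp2
  have hspec : p1.append p2 = r := Walk.take_spec r hyr
  have hsupp : r.support = p1.support ++ p2.support.tail := by
    conv_lhs => rw [← hspec]
    rw [Walk.support_append]
  have htail : r.support.tail = p1.support.tail ++ p2.support.tail := by
    rw [hsupp, Walk.support_eq_cons p1]
    rfl
  have hnd : r.support.tail.Nodup := hrc.2
  rw [htail, List.nodup_append] at hnd
  have hxp2 : x ∈ p2.support.tail := by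
    have hxs : x ∈ p2.support := Walk.end_mem_support _
    rw [Walk.support_eq_cons, List.mem_cons] at hxs
    rcases hxs with h1 | h1
    · exact absurd h1.symm hxy.symm
    · exact h1
  have hyp1 : y ∈ p1.support.tail := by
    have hys : y ∈ p1.support := Walk.end_mem_support _
    rw [Walk.support_eq_cons, List.mem_cons] at hys
    rcases hys with h1 | h1
    · exact absurd h1.symm hxy
    · exact h1
  have hp1path : p1.IsPath := by
    rw [Walk.isPath_def, Walk.support_eq_cons]
    exact List.nodup_cons.mpr ⟨fun hmem => hnd.2.2 x hmem x hxp2 rfl, hnd.1⟩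
  have hp2path : p2.IsPath := by
    rw [Walk.isPath_def, Walk.support_eq_cons]
    exact List.nodup_cons.mpr ⟨fun hmem => hnd.2.2 y hyp1 y hmem rfl, hnd.2.1⟩
  have hep1 : s(x, y) ∉ p1.edges := fun hh =>
    he (hedger _ (Walk.edges_takeUntil_subset r hyr hh))
  have hep2 : s(y, x) ∉ p2.edges := fun hh => by
    rw [Sym2.eq_swap] at hh
    exact he (hedger _ (Walk.edges_dropUntil_subset r hyr hh))
  have hlen12 : p1.length + p2.length = c.length := by
    have := congrArg Walk.length hspec
    rw [Walk.length_append] at this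
    rw [this, hlenr]
  have hl1 : 2 ≤ p1.length := two_le_length_of_ne p1 hxy hep1
  have hl2 : 2 ≤ p2.length := two_le_length_of_ne p2 hxy.symm hep2
  have hC1 : (Walk.cons hadj.symm p1).IsCycle := by
    rw [Walk.cons_isCycle_iff]
    refine ⟨hp1path, fun hh => hep1 ?_⟩
    rwa [Sym2.eq_swap] at hh
  have hC2 : (Walk.cons hadj p2).IsCycle := by
    rw [Walk.cons_isCycle_iff]
    refine ⟨hp2path, fun hh => hep2 ?_⟩
    rwa [Sym2.eq_swap] at hh
  have har' : a ∈ p1.support ∨ a ∈ p2.support := by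
    have := (mem_support_rotate c hx).mpr (Walk.start_mem_support c)
    rw [hsupp, List.mem_append] at this
    rcases this with h1 | h1
    · exact Or.inl h1
    · exact Or.inr (List.mem_of_mem_tail h1)
  rcases har' with ha1 | ha2
  · have haC1 : a ∈ (Walk.cons hadj.symm p1).support := by
      rw [Walk.support_cons]
      exact List.mem_cons_of_mem _ ha1
    refine ⟨(Walk.cons hadj.symm p1).rotate _ haC1, hC1.rotate haC1, ?_, ?_⟩
    · intro z hz
      have hz' := (mem_support_rotate _ haC1).mp hz
      rw [Walk.support_cons, List.mem_cons] at hz'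
      rcases hz' with h1 | h1
      · exact h1 ▸ hy
      · exact hsuppr z (by rw [hsupp, List.mem_append]; exact Or.inl h1)
    · rw [length_rotate', Walk.length_cons]
      omega
  · have haC2 : a ∈ (Walk.cons hadj p2).support := by
      rw [Walk.support_cons]
      exact List.mem_cons_of_mem _ ha2
    refine ⟨(Walk.cons hadj p2).rotate _ haC2, hC2.rotate haC2, ?_, ?_⟩
    · intro z hz
      have hz' := (mem_support_rotate _ haC2).mp hz
      rw [Walk.support_cons, List.mem_cons] at hz'
      rcases hz' with h1 | h1
      · exact h1 ▸ hx
      · refine hsuppr z ?_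
        rw [hsupp, List.mem_append]
        rcases List.mem_cons.mp ((Walk.support_eq_cons p2) ▸ h1) with h2 | h2
        · exact Or.inl (h2 ▸ Walk.end_mem_support p1)
        · exact Or.inr h2
    · rw [length_rotate', Walk.length_cons]
      omega

private lemma from_start {a b t y : V} (h : G.Adj a b) (p' : G.Walk b t)
    (hnd : (Walk.cons h p').support.Nodup) (hy : y ∈ p'.support) (hyt : y ≠ t) :
    ∃ q : G.Walk a y, q.support.Nodup ∧
      (∀ z ∈ q.support, z ∈ (Walk.cons h p').support) ∧ t ∉ q.support := by
  rw [Walk.support_cons, List.nodup_cons] at hnd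
  have hnd' : p'.support.Nodup := hnd.2
  have hap' : a ∉ p'.support := hnd.1
  refine ⟨Walk.cons h (p'.takeUntil y hy), ?_, ?_, ?_⟩
  · rw [Walk.support_cons, List.nodup_cons]
    refine ⟨fun hmem => hap' (Walk.support_takeUntil_subset p' hy hmem), ?_⟩
    exact (((Walk.isPath_def _).mpr hnd').takeUntil hy).support_nodup
  · intro z hz
    rw [Walk.support_cons, List.mem_cons] at hz ⊢
    rcases hz with h1 | h1
    · exact Or.inl h1
    · exact Or.inr (Walk.support_takeUntil_subset p' hy h1)
  · rw [Walk.support_cons, List.mem_cons]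
    rintro (h1 | h1)
    · exact hap' (h1 ▸ Walk.end_mem_support p')
    · exact not_end_mem_takeUntil hnd' hy hyt h1

private lemma path_between {u t : V} (p : G.Walk u t) :
    p.support.Nodup →
    ∀ x y : V, x ∈ p.support → y ∈ p.support → x ≠ y → x ≠ t → y ≠ t →
    ∃ q : G.Walk x y, q.support.Nodup ∧ (∀ z ∈ q.support, z ∈ p.support) ∧
      t ∉ q.support := by
  induction p with
  | nil =>
    intro hnd x y hx hy hxy hxt hyt
    simp only [Walk.support_nil, List.mem_singleton] at hx hy
    exact absurd (hx.trans hy.symm) hxy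
  | @cons a b t h p' ih =>
    intro hnd x y hx hy hxy hxt hyt
    by_cases hxa : x = a
    · subst hxa
      have hy' : y ∈ p'.support := by
        rcases List.mem_cons.mp ((Walk.support_cons h p') ▸ hy) with h1 | h1
        · exact absurd h1.symm hxy
        · exact h1
      exact from_start h p' hnd hy' hyt
    by_cases hya : y = a
    · subst hya
      have hx' : x ∈ p'.support := by
        rcases List.mem_cons.mp ((Walk.support_cons h p') ▸ hx) with h1 | h1
        · exact absurd h1 hxa
        · exact h1
      obtain ⟨q, hq1, hq2, hq3⟩ := from_start h p' hnd hx' hxt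
      refine ⟨q.reverse, ?_, ?_, ?_⟩
      · rw [Walk.support_reverse]; exact List.nodup_reverse.mpr hq1
      · intro z hz
        rw [Walk.support_reverse, List.mem_reverse] at hz
        exact hq2 z hz
      · rw [Walk.support_reverse, List.mem_reverse]; exact hq3
    · have hx' : x ∈ p'.support := by
        rcases List.mem_cons.mp ((Walk.support_cons h p') ▸ hx) with h1 | h1
        · exact absurd h1 hxa
        · exact h1
      have hy' : y ∈ p'.support := by
        rcases List.mem_cons.mp ((Walk.support_cons h p') ▸ hy) with h1 | h1
        · exact absurd h1 hya
        · exact h1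
      have hnd' : p'.support.Nodup := by
        rw [Walk.support_cons, List.nodup_cons] at hnd; exact hnd.2
      obtain ⟨q, hq1, hq2, hq3⟩ := ih hnd' x y hx' hy' hxy hxt hyt
      refine ⟨q, hq1, fun z hz => ?_, hq3⟩
      rw [Walk.support_cons, List.mem_cons]
      exact Or.inr (hq2 z hz)

private lemma cycle_path_between {t x y : V} (c : G.Walk t t) (hc : c.IsCycle)
    (hx : x ∈ c.support) (hy : y ∈ c.support) (hxy : x ≠ y) (hxt : x ≠ t)
    (hyt : y ≠ t) :
    ∃ q : G.Walk x y, q.support.Nodup ∧ (∀ z ∈ q.support, z ∈ c.support) ∧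
      t ∉ q.support := by
  cases c with
  | nil => exact absurd rfl hc.ne_nil
  | cons h p' =>
    have hp' : p'.IsPath := ((Walk.cons_isCycle_iff p' h).mp hc).1
    have hx' : x ∈ p'.support := by
      rcases List.mem_cons.mp ((Walk.support_cons h p') ▸ hx) with h1 | h1
      · exact absurd h1 hxt
      · exact h1
    have hy' : y ∈ p'.support := by
      rcases List.mem_cons.mp ((Walk.support_cons h p') ▸ hy) with h1 | h1
      · exact absurd h1 hyt
      · exact h1
    obtain ⟨q, h1, h2, h3⟩ := path_between p' hp'.support_nodup x y hx' hy' hxy hxt hyt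
    refine ⟨q, h1, fun z hz => ?_, h3⟩
    rw [Walk.support_cons, List.mem_cons]
    exact Or.inr (h2 z hz)

end DecEq

private lemma mk_cycle {v1 x y : V} (hvx : G.Adj v1 x) (hvy : G.Adj v1 y) (hxy : x ≠ y)
    (q : G.Walk x y) (hnd : q.support.Nodup) (hv1 : v1 ∉ q.support) :
    ∃ c : G.Walk v1 v1, c.IsCycle ∧ ∀ z ∈ c.support, z = v1 ∨ z ∈ q.support := by
  refine ⟨Walk.cons hvx (q.concat hvy.symm), ?_, ?_⟩
  · rw [Walk.cons_isCycle_iff]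
    constructor
    · rw [Walk.isPath_def, Walk.support_concat, List.nodup_append]
      exact ⟨hnd, List.nodup_singleton _, by
        intro z hz z' hz' hzz'
        rw [List.mem_singleton] at hz'
        subst hz' hzz'
        exact hv1 hz⟩
    · rw [Walk.edges_concat, List.concat_eq_append, List.mem_append]
      rintro (h1 | h1)
      · exact hv1 (Walk.fst_mem_support_of_mem_edges q h1)
      · rw [List.mem_singleton] at h1
        rcases Sym2.eq_iff.mp h1 with ⟨h2, h3⟩ | ⟨h2, h3⟩
        · exact hv1 (h2 ▸ Walk.end_mem_support q)
        · exact hxy h3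
  · intro z hz
    rw [Walk.support_cons, List.mem_cons] at hz
    rcases hz with h1 | h1
    · exact Or.inl h1
    · rw [Walk.support_concat, List.mem_append] at h1
      rcases h1 with h2 | h2
      · exact Or.inr h2
      · rw [List.mem_singleton] at h2
        exact Or.inl h2

private lemma scan [DecidableEq V] {S : Set V} {v' : V} {D : G.Walk v' v'}
    (hv'S : v' ∉ S)
    (hv'safe : ¬ ∃ c : G.Walk v' v', c.IsCycle ∧ ∀ x ∈ c.support, x ∈ S ∪ {v'})
    (hInd : ∀ x ∈ D.support, ∀ y ∈ D.support, G.Adj x y → s(x, y) ∈ D.edges) :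
    ∀ (n : ℕ) (b : V) (q : G.Walk v' b), q.length ≤ n →
      (∃ c : G.Walk b b, c.IsCycle ∧ ∀ x ∈ c.support, x ∈ S ∪ {b}) →
      (∀ e ∈ q.edges, e ∈ D.edges) → (∀ z ∈ q.support, z ∈ D.support) →
      ∃ (v1 w1 b' : V) (c' : G.Walk b' b'),
        (¬ ∃ c : G.Walk v1 v1, c.IsCycle ∧ ∀ x ∈ c.support, x ∈ S ∪ {v1}) ∧
        s(v1, w1) ∈ D.edges ∧ c'.IsCycle ∧ (∀ x ∈ c'.support, x ∈ S ∪ {b'}) ∧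
        w1 ∈ c'.support ∧ v1 ∉ c'.support ∧ (w1 = b' ∨ ¬ G.Adj v1 b') := by
  intro n
  induction n with
  | zero =>
    intro b q hlen hb _ _
    have hvb : v' = b := Walk.eq_of_length_eq_zero (Nat.le_zero.mp hlen)
    subst hvb
    exact absurd hb hv'safe
  | succ n IH =>
    intro b q hlen hb hqe hqs
    obtain ⟨c', hc'cyc, hc'supp⟩ := hb
    have hbv' : b ≠ v' := by
      rintro rfl
      exact hv'safe ⟨c', hc'cyc, hc'supp⟩
    have hv'c' : v' ∉ c'.support := by
      intro hmem
      rcases hc'supp v' hmem with hS | hb'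
      · exact hv'S hS
      · exact hbv' (Set.mem_singleton_iff.mp hb').symm
    obtain ⟨d, hd, hdfst, hdsnd⟩ :=
      q.exists_boundary_dart {x | x ∉ c'.support} hv'c'
        (fun hh => hh (Walk.start_mem_support c'))
    have hdsnd' : d.snd ∈ c'.support := not_not.mp hdsnd
    have hedgeq : s(d.fst, d.snd) ∈ q.edges := List.mem_map_of_mem (f := Dart.edge) hd
    have hedgeD : s(d.fst, d.snd) ∈ D.edges := hqe _ hedgeq
    have hfstq : d.fst ∈ q.support := Walk.dart_fst_mem_support_of_mem_darts q hd
    by_cases hsafe1 : ∃ c : G.Walk d.fst d.fst, c.IsCycle ∧ ∀ x ∈ c.support, x ∈ S ∪ {d.fst}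
    · have hne : d.fst ≠ b := by
        rintro rfl
        exact hdfst (Walk.start_mem_support c')
      have hlt : (q.takeUntil d.fst hfstq).length < q.length := by
        have hspec := congrArg Walk.length (Walk.take_spec q hfstq)
        rw [Walk.length_append] at hspec
        have hdrop : (q.dropUntil d.fst hfstq).length ≠ 0 := fun h0 =>
          hne (Walk.eq_of_length_eq_zero h0)
        omega
      exact IH d.fst (q.takeUntil d.fst hfstq) (by omega) hsafe1
        (fun e he => hqe e (Walk.edges_takeUntil_subset q hfstq he))
        (fun z hz => hqs z (Walk.support_takeUntil_subset q hfstq hz))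
    · by_cases hadjb : G.Adj d.fst b
      · refine ⟨d.fst, b, b, c', hsafe1, ?_, hc'cyc, hc'supp,
          Walk.start_mem_support c', hdfst, Or.inl rfl⟩
        exact hInd d.fst (hqs _ hfstq) b (hqs _ (Walk.end_mem_support q)) hadjb
      · exact ⟨d.fst, d.snd, b, c', hsafe1, hedgeD, hc'cyc, hc'supp,
          hdsnd', hdfst, Or.inr hadjb⟩

end CycleAux
theorem stmt_13 {V : Type*} [Fintype V] (G : SimpleGraph V) (v' : V) (S : Set V)
    (h : v' ∈ (cycInt G)^[2] S \ (cycInt G)^[1] S) :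
    ∃ (v w : V), G.Adj v w ∧
      (∃ c : G.Walk v v, c.IsCycle ∧
        (∀ x ∈ c.support, ∀ y ∈ c.support, G.Adj x y → c.toSubgraph.Adj x y) ∧
        s(v, w) ∈ c.edges) ∧
      (∃ c' : G.Walk w w, c'.IsCycle ∧ v ∉ c'.support ∧
        {x | x ∈ c'.support ∧ x ≠ w ∧ G.Adj v x}.Subsingleton) := by
  classical
  obtain ⟨h1, h2⟩ := h
  rw [Function.iterate_one] at h2
  rw [show (cycInt G)^[2] S = cycInt G (cycInt G S) from by
    rw [Function.iterate_succ_apply', Function.iterate_one]] at h1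
  have hv'S : v' ∉ S := fun hh => h2 (Set.mem_union_left _ hh)
  have hv'safe : ¬ ∃ c : G.Walk v' v', c.IsCycle ∧ ∀ x ∈ c.support, x ∈ S ∪ {v'} :=
    fun hh => h2 (Set.mem_union_right _ hh)
  -- extract a cycle through v' inside I(S) ∪ {v'}
  have hD0 : ∃ c : G.Walk v' v', c.IsCycle ∧ ∀ x ∈ c.support, x ∈ cycInt G S ∪ {v'} := by
    rcases h1 with hh | hh
    · exact absurd hh h2
    · exact hh
  -- a minimum-length such cycle
  have hP : ∃ n : ℕ, ∃ c : G.Walk v' v', c.IsCycle ∧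
      (∀ x ∈ c.support, x ∈ cycInt G S ∪ {v'}) ∧ c.length = n := by
    obtain ⟨c, hc1, hc2⟩ := hD0
    exact ⟨c.length, c, hc1, hc2, rfl⟩
  obtain ⟨D, hDcyc, hDsupp, hDlen⟩ := Nat.find_spec hP
  -- the minimum cycle is induced
  have hInd : ∀ x ∈ D.support, ∀ y ∈ D.support, G.Adj x y → s(x, y) ∈ D.edges := by
    intro x hx y hy hadj
    by_contra he
    obtain ⟨c₂, hc₂, hsub, hlt⟩ := chord_split hDcyc hx hy hadj he
    exact Nat.find_min hP (hDlen ▸ hlt) ⟨c₂, hc₂, fun z hz => hDsupp z (hsub z hz), rfl⟩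
  -- D contains an "unsafe" vertex
  have hU : ∃ u ∈ D.support, ∃ c : G.Walk u u, c.IsCycle ∧ ∀ x ∈ c.support, x ∈ S ∪ {u} := by
    by_contra hno
    push_neg at hno
    refine hv'safe ⟨D, hDcyc, fun x hx => ?_⟩
    rcases hDsupp x hx with hx1 | hx1
    · rcases hx1 with hx2 | hx2
      · exact Set.mem_union_left _ hx2
      · obtain ⟨c, hc1, hc2⟩ := hx2
        obtain ⟨z, hz1, hz2⟩ := hno x hx c hc1
        exact absurd (hc2 z hz1) hz2
    · exact Set.mem_union_right _ hx1
  obtain ⟨u0, hu0D, hu0U⟩ := hU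
  -- run the scan along D.takeUntil u0
  obtain ⟨v1, w1, b, c', hsafe1, hedgeD, hc'cyc, hc'supp, hw1c', hv1c', hdisj⟩ :=
    scan hv'S hv'safe hInd (D.takeUntil u0 hu0D).length u0 (D.takeUntil u0 hu0D)
      le_rfl hu0U (fun e he => Walk.edges_takeUntil_subset D hu0D he)
      (fun z hz => Walk.support_takeUntil_subset D hu0D hz)
  have hadj : G.Adj v1 w1 := Walk.adj_of_mem_edges D hedgeD
  have hv1D : v1 ∈ D.support := Walk.fst_mem_support_of_mem_edges D hedgeD
  refine ⟨v1, w1, hadj, ⟨D.rotate _ hv1D, hDcyc.rotate hv1D, ?_, ?_⟩,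
    ⟨c'.rotate _ hw1c', hc'cyc.rotate hw1c', ?_, ?_⟩⟩
  · -- induced
    intro x hx y hy hxy
    have hx' := (mem_support_rotate D hv1D).mp hx
    have hy' := (mem_support_rotate D hv1D).mp hy
    have he : s(x, y) ∈ (D.rotate _ hv1D).edges :=
      (D.rotate_edges _ hv1D).mem_iff.mpr (hInd x hx' y hy' hxy)
    exact ((Walk.mem_edges_toSubgraph _).mpr he : s(x, y) ∈ _)
  · exact (D.rotate_edges _ hv1D).mem_iff.mpr hedgeD
  · exact fun hh => hv1c' ((mem_support_rotate c' hw1c').mp hh)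
  · -- subsingleton of neighbors
    intro x hx y hy
    by_contra hxy
    obtain ⟨hxsup, hxw, hvx⟩ := hx
    obtain ⟨hysup, hyw, hvy⟩ := hy
    have hxc' : x ∈ c'.support := (mem_support_rotate c' hw1c').mp hxsup
    have hyc' : y ∈ c'.support := (mem_support_rotate c' hw1c').mp hysup
    have hxS : x ∈ S := by
      rcases hc'supp x hxc' with hh | hh
      · exact hh
      · rcases hdisj with hd1 | hd1
        · exact absurd (hh.trans hd1.symm) hxw
        · exact absurd (hh ▸ hvx) hd1
    have hyS : y ∈ S := by
      rcases hc'supp y hyc' with hh | hh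
      · exact hh
      · rcases hdisj with hd1 | hd1
        · exact absurd (hh.trans hd1.symm) hyw
        · exact absurd (hh ▸ hvy) hd1
    obtain ⟨t, htc, hxt, hyt, htS⟩ :
        ∃ t, t ∈ c'.support ∧ x ≠ t ∧ y ≠ t ∧
          (∀ z ∈ c'.support, z ≠ t → z ∈ S) := by
      by_cases hbS : b ∈ S
      · refine ⟨w1, hw1c', hxw, hyw, fun z hz _ => ?_⟩
        rcases hc'supp z hz with hh | hh
        · exact hh
        · exact hh ▸ hbS
      · refine ⟨b, Walk.start_mem_support c', fun hh => hbS (hh ▸ hxS),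
          fun hh => hbS (hh ▸ hyS), fun z hz hzb => ?_⟩
        rcases hc'supp z hz with hh | hh
        · exact hh
        · exact absurd hh hzb
    have hxr : x ∈ (c'.rotate _ htc).support := (mem_support_rotate c' htc).mpr hxc'
    have hyr : y ∈ (c'.rotate _ htc).support := (mem_support_rotate c' htc).mpr hyc'
    obtain ⟨q, hq1, hq2, hq3⟩ := cycle_path_between (c'.rotate _ htc) (hc'cyc.rotate htc)
      hxr hyr hxy hxt hyt
    have hq2' : ∀ z ∈ q.support, z ∈ c'.support := fun z hz =>
      (mem_support_rotate c' htc).mp (hq2 z hz)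
    have hqS : ∀ z ∈ q.support, z ∈ S := fun z hz =>
      htS z (hq2' z hz) (fun hh => hq3 (hh ▸ hz))
    have hv1q : v1 ∉ q.support := fun hh => hv1c' (hq2' v1 hh)
    obtain ⟨c₀, hc₀cyc, hc₀supp⟩ := mk_cycle hvx hvy hxy q hq1 hv1q
    refine hsafe1 ⟨c₀, hc₀cyc, fun z hz => ?_⟩
    rcases hc₀supp z hz with hh | hh
    · exact Set.mem_union_right _ hh
    · exact Set.mem_union_left _ (hqS z hh)
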